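/- Let β ∈ (0,2) and N > 0, and let B be a Young function with B(t) = N e^{t^β} for t > t₀. Then ∫_0^t B^{-1}(1/Φ(τ)) dτ = 2^{-1/β} (β/(2+β)) t^{2/β + 1} + 2^{-1/β} (2/(2-β)) t^{2/β - 1} log t + o(t^{2/β-1} log t) as t → ∞, where Φ is the Gaussian tail function. -/

import Mathlib

open MeasureTheory Filter

/-- The Gaussian tail function `Φ(t) = (2π)^{-1/2} ∫_t^∞ e^{-τ²/2} dτ`. -/
noncomputable def Phi (t : ℝ) : ℝ :=
  (Real.sqrt (2 * Real.pi))⁻¹ * ∫ τ in Set.Ioi t, Real.exp (-τ^2/2)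

open Set


noncomputable def G (t : ℝ) : ℝ := ∫ τ in Set.Ioi t, Real.exp (-τ^2/2)

lemma gauss_integrable : Integrable (fun τ : ℝ => Real.exp (-τ^2/2)) := by
  have h := integrable_exp_neg_mul_sq (b := (1:ℝ)/2) (by norm_num)
  refine h.congr ?_
  exact Filter.Eventually.of_forall fun x => by ring_nf

lemma G_pos (t : ℝ) : 0 < G t := by
  rw [G, setIntegral_pos_iff_support_of_nonneg_ae]
  · have : Function.support (fun τ : ℝ => Real.exp (-τ^2/2)) = Set.univ := by
      ext x; simp [Real.exp_ne_zero]
    rw [this]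
    simpa using measure_Ioi_pos (volume : Measure ℝ) t
  · exact Filter.Eventually.of_forall fun x => (Real.exp_pos _).le
  · exact gauss_integrable.integrableOn

lemma G_antitone : Antitone G := by
  intro s t hst
  exact setIntegral_mono_set gauss_integrable.integrableOn
    (Filter.Eventually.of_forall fun x => (Real.exp_pos _).le)
    (HasSubset.Subset.eventuallyLE (Set.Ioi_subset_Ioi hst))

lemma G_upper {t : ℝ} (ht : 1 ≤ t) : G t ≤ Real.exp (-t^2/2) / t := by
  have ht0 : 0 < t := lt_of_lt_of_le one_pos ht
  have hcont : ContinuousWithinAt (fun τ : ℝ => -Real.exp (-τ^2/2)) (Set.Ici t) t :=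
    Continuous.continuousWithinAt (by continuity)
  have hderiv : ∀ x ∈ Set.Ioi t, HasDerivAt (fun τ : ℝ => -Real.exp (-τ^2/2))
      (x * Real.exp (-x^2/2)) x := by
    intro x _
    have h1 : HasDerivAt (fun τ : ℝ => -τ^2/2) (-x) x := by
      have := ((hasDerivAt_pow 2 x).neg).div_const 2
      refine this.congr_deriv (Eq.symm ?_); push_cast; ring
    have := (h1.exp).neg
    refine this.congr_deriv (Eq.symm ?_); ring
  have hnn : ∀ x ∈ Set.Ioi t, 0 ≤ x * Real.exp (-x^2/2) := by
    intro x hx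
    have hx0 : 0 < x := lt_trans ht0 hx
    positivity
  have htend : Tendsto (fun τ : ℝ => -Real.exp (-τ^2/2)) atTop (nhds 0) := by
    have h2 : Tendsto (fun τ : ℝ => τ^2/2) atTop atTop :=
      (tendsto_pow_atTop two_ne_zero).atTop_div_const (by norm_num)
    have h3 : Tendsto (fun τ : ℝ => Real.exp (-τ^2/2)) atTop (nhds 0) := by
      have := Real.tendsto_exp_atBot.comp (tendsto_neg_atBot_iff.mpr h2)
      refine this.congr fun x => by simp [Function.comp]; ring_nf
    simpa using h3.neg
  have hint : IntegrableOn (fun x : ℝ => x * Real.exp (-x^2/2)) (Set.Ioi t) :=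
    integrableOn_Ioi_deriv_of_nonneg hcont hderiv hnn htend
  have key : (∫ τ in Set.Ioi t, τ * Real.exp (-τ^2/2)) = Real.exp (-t^2/2) := by
    have := integral_Ioi_of_hasDerivAt_of_nonneg hcont hderiv hnn htend
    rw [this]; ring
  calc G t ≤ ∫ τ in Set.Ioi t, (τ/t) * Real.exp (-τ^2/2) := by
        apply setIntegral_mono_on gauss_integrable.integrableOn
        · exact IntegrableOn.congr_fun (hint.div_const t) (fun x hx => by ring) measurableSet_Ioi
        · exact measurableSet_Ioi
        · intro x hx
          have hx1 : 1 ≤ x / t := (one_le_div ht0).mpr (le_of_lt hx)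
          nlinarith [Real.exp_pos (-x^2/2), (le_of_lt (Set.mem_Ioi.mp hx))]
    _ = Real.exp (-t^2/2) / t := by
        rw [← key, ← integral_div]
        apply setIntegral_congr_fun measurableSet_Ioi
        intro x hx; ring

lemma G_lower {t : ℝ} (ht : 2 ≤ t) : Real.exp (-t^2/2) * (1/t - 1/t^3) ≤ G t := by
  have ht0 : 0 < t := lt_of_lt_of_le two_pos ht
  set F : ℝ → ℝ := fun τ => -((τ⁻¹ - (τ^3)⁻¹) * Real.exp (-τ^2/2)) with hF
  set F' : ℝ → ℝ := fun τ => (1 - 3/τ^4) * Real.exp (-τ^2/2) with hF'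
  have hderiv : ∀ x ∈ Set.Ici t, HasDerivAt F (F' x) x := by
    intro x hx
    have hx0 : 0 < x := lt_of_lt_of_le ht0 (Set.mem_Ici.mp hx)
    have h1 : HasDerivAt (fun τ : ℝ => τ⁻¹ - (τ^3)⁻¹) (-(x^2)⁻¹ - (-(3*x^2) / (x^3)^2)) x := by
      exact (hasDerivAt_inv hx0.ne').sub (((hasDerivAt_pow 3 x).inv (by positivity)).congr_deriv
        (by push_cast; ring))
    have h2 : HasDerivAt (fun τ : ℝ => Real.exp (-τ^2/2)) (-x * Real.exp (-x^2/2)) x := by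
      have h3 : HasDerivAt (fun τ : ℝ => -τ^2/2) (-x) x := by
        have := ((hasDerivAt_pow 2 x).neg).div_const 2
        refine this.congr_deriv (Eq.symm ?_); push_cast; ring
      have := h3.exp
      convert this using 1; ring
    have := (h1.mul h2).neg
    refine this.congr_deriv (Eq.symm ?_)
    rw [hF']
    have hx4 : x^4 ≠ 0 := by positivity
    field_simp
    ring
  have hnn : ∀ x ∈ Set.Ioi t, 0 ≤ F' x := by
    intro x hx
    have hx2 : 2 ≤ x := le_trans ht (le_of_lt hx)
    have : 3 / x^4 ≤ 1 := by
      rw [div_le_one (by positivity)]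
      nlinarith [pow_le_pow_left₀ (by norm_num : (0:ℝ) ≤ 2) hx2 4]
    have := Real.exp_pos (-x^2/2)
    rw [hF']
    nlinarith
  have htend : Tendsto F atTop (nhds 0) := by
    have h1 : Tendsto (fun τ : ℝ => τ⁻¹ - (τ^3)⁻¹) atTop (nhds 0) := by
      have a1 : Tendsto (fun τ : ℝ => τ⁻¹) atTop (nhds 0) := tendsto_inv_atTop_zero
      have a2 : Tendsto (fun τ : ℝ => (τ^3)⁻¹) atTop (nhds 0) :=
        tendsto_inv_atTop_zero.comp (tendsto_pow_atTop three_ne_zero)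
      simpa using a1.sub a2
    have h2 : Tendsto (fun τ : ℝ => Real.exp (-τ^2/2)) atTop (nhds 0) := by
      have h2' : Tendsto (fun τ : ℝ => τ^2/2) atTop atTop :=
        (tendsto_pow_atTop two_ne_zero).atTop_div_const (by norm_num)
      have := Real.tendsto_exp_atBot.comp (tendsto_neg_atBot_iff.mpr h2')
      refine this.congr fun x => by simp [Function.comp]; ring_nf
    simpa using (h1.mul h2).neg
  have key := integral_Ioi_of_hasDerivAt_of_nonneg' hderiv hnn htend
  have hintF' : IntegrableOn F' (Set.Ioi t) :=
    integrableOn_Ioi_deriv_of_nonneg' hderiv hnn htend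
  have hle : (∫ τ in Set.Ioi t, F' τ) ≤ G t := by
    apply setIntegral_mono_on hintF' gauss_integrable.integrableOn measurableSet_Ioi
    intro x hx
    rw [hF']
    have hx0 : 0 < x := lt_trans ht0 hx
    have h4 : (0:ℝ) ≤ 3 / x^4 := by positivity
    nlinarith [Real.exp_pos (-x^2/2)]
  have heq : (∫ τ in Set.Ioi t, F' τ) = Real.exp (-t^2/2) * (1/t - 1/t^3) := by
    rw [key]
    show 0 - F t = _
    simp only [hF, one_div]
    ring
  linarith [heq ▸ hle]



lemma sqrt2pi_pos : 0 < Real.sqrt (2 * Real.pi) :=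
  Real.sqrt_pos.mpr (by positivity)

lemma Phi_eq (t : ℝ) : Phi t = (Real.sqrt (2 * Real.pi))⁻¹ * G t := rfl

lemma Phi_pos (t : ℝ) : 0 < Phi t :=
  mul_pos (inv_pos.mpr sqrt2pi_pos) (G_pos t)

lemma Phi_antitone : Antitone Phi := fun s t hst =>
  mul_le_mul_of_nonneg_left (G_antitone hst) (inv_pos.mpr sqrt2pi_pos).le

lemma one_div_Phi_tendsto : Tendsto (fun t => 1 / Phi t) atTop atTop := by
  have h0 : Tendsto Phi atTop (nhds 0) := by
    have hub : Tendsto (fun t : ℝ => (Real.sqrt (2*Real.pi))⁻¹ * (Real.exp (-t^2/2) / t))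
        atTop (nhds 0) := by
      have h2' : Tendsto (fun τ : ℝ => τ^2/2) atTop atTop :=
        (tendsto_pow_atTop two_ne_zero).atTop_div_const (by norm_num)
      have hexp : Tendsto (fun τ : ℝ => Real.exp (-τ^2/2)) atTop (nhds 0) := by
        have := Real.tendsto_exp_atBot.comp (tendsto_neg_atBot_iff.mpr h2')
        refine this.congr fun x => by simp [Function.comp]; ring_nf
      simpa [div_eq_mul_inv] using (hexp.mul tendsto_inv_atTop_zero).const_mul (Real.sqrt (2*Real.pi))⁻¹
    apply squeeze_zero' (Filter.Eventually.of_forall fun t => (Phi_pos t).le)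
      ?_ hub
    filter_upwards [eventually_ge_atTop (1:ℝ)] with t ht
    rw [Phi_eq]
    exact mul_le_mul_of_nonneg_left (by simpa [div_eq_mul_inv] using G_upper ht)
      (inv_pos.mpr sqrt2pi_pos).le
  have h1 : Tendsto Phi atTop (nhdsWithin 0 (Set.Ioi 0)) :=
    tendsto_nhdsWithin_of_tendsto_nhds_of_eventually_within _ h0
      (Filter.Eventually.of_forall fun t => Phi_pos t)
  simpa [one_div, Pi.inv_def] using h1.inv_tendsto_nhdsGT_zero

lemma logPhi_lower (N : ℝ) (hN : 0 < N) {t : ℝ} (ht : 2 ≤ t) :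
    t^2/2 + Real.log t + (Real.log (Real.sqrt (2*Real.pi)) - Real.log N)
      ≤ Real.log ((1/Phi t)/N) := by
  have ht0 : 0 < t := lt_of_lt_of_le two_pos ht
  have hGpos := G_pos t
  have hkey : Real.log ((1/Phi t)/N) =
      Real.log (Real.sqrt (2*Real.pi)) - Real.log N - Real.log (G t) := by
    rw [Phi_eq, one_div, mul_inv, inv_inv, div_eq_mul_inv, Real.log_mul (by positivity)
      (inv_ne_zero hN.ne'), Real.log_mul sqrt2pi_pos.ne' (by positivity), Real.log_inv, Real.log_inv]
    ring
  rw [hkey]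
  have hub : Real.log (G t) ≤ -t^2/2 - Real.log t := by
    calc Real.log (G t) ≤ Real.log (Real.exp (-t^2/2) / t) :=
          Real.log_le_log hGpos (G_upper (by linarith))
      _ = -t^2/2 - Real.log t := by
          rw [Real.log_div (Real.exp_ne_zero _) ht0.ne', Real.log_exp]
  linarith

lemma logPhi_upper (N : ℝ) (hN : 0 < N) {t : ℝ} (ht : 2 ≤ t) :
    Real.log ((1/Phi t)/N) ≤ t^2/2 + Real.log t
      + (Real.log (Real.sqrt (2*Real.pi)) - Real.log N) - Real.log (1 - 1/t^2) := by
  have ht0 : 0 < t := lt_of_lt_of_le two_pos ht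
  have hGpos := G_pos t
  have honemt : (0:ℝ) < 1 - 1/t^2 := by
    rw [sub_pos, div_lt_one (by positivity)]
    nlinarith
  have hkey : Real.log ((1/Phi t)/N) =
      Real.log (Real.sqrt (2*Real.pi)) - Real.log N - Real.log (G t) := by
    rw [Phi_eq, one_div, mul_inv, inv_inv, div_eq_mul_inv, Real.log_mul (by positivity)
      (inv_ne_zero hN.ne'), Real.log_mul sqrt2pi_pos.ne' (by positivity), Real.log_inv,
      Real.log_inv]
    ring
  rw [hkey]
  have hlb : -t^2/2 - Real.log t + Real.log (1 - 1/t^2) ≤ Real.log (G t) := by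
    have h1 : Real.exp (-t^2/2) * (1/t - 1/t^3) = Real.exp (-t^2/2) * (1 - 1/t^2) / t := by
      field_simp
    calc -t^2/2 - Real.log t + Real.log (1 - 1/t^2)
        = Real.log (Real.exp (-t^2/2) * (1 - 1/t^2) / t) := by
          rw [Real.log_div (by positivity) ht0.ne', Real.log_mul (Real.exp_ne_zero _)
            honemt.ne', Real.log_exp]
          ring
      _ ≤ Real.log (G t) := Real.log_le_log (by positivity) (h1 ▸ G_lower ht)
  linarith

lemma E_tendsto (N : ℝ) (hN : 0 < N) :
    Tendsto (fun t => Real.log ((1/Phi t)/N)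
      - (t^2/2 + Real.log t + (Real.log (Real.sqrt (2*Real.pi)) - Real.log N)))
      atTop (nhds 0) := by
  have h1 : Tendsto (fun t : ℝ => 1 - 1/t^2) atTop (nhds 1) := by
    have h0 : Tendsto (fun t : ℝ => (t^2)⁻¹) atTop (nhds 0) :=
      tendsto_inv_atTop_zero.comp (tendsto_pow_atTop two_ne_zero)
    have := (tendsto_const_nhds (α := ℝ) (x := (1:ℝ)) (f := atTop)).sub h0
    simpa [one_div] using this
  have h2 : Tendsto (fun t : ℝ => Real.log (1 - 1/t^2)) atTop (nhds 0) := by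
    have := (Real.continuousAt_log one_ne_zero).tendsto.comp h1
    simpa [Function.comp_def, Real.log_one] using this
  have h3 : Tendsto (fun t : ℝ => -Real.log (1 - 1/t^2)) atTop (nhds 0) := by
    simpa using h2.neg
  apply tendsto_of_tendsto_of_tendsto_of_le_of_le' (g := fun _ => (0:ℝ))
    (h := fun t : ℝ => -Real.log (1 - 1/t^2)) tendsto_const_nhds h3
  · filter_upwards [eventually_ge_atTop (2:ℝ)] with t ht
    linarith [logPhi_lower N hN ht]
  · filter_upwards [eventually_ge_atTop (2:ℝ)] with t ht
    linarith [logPhi_upper N hN ht]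

lemma cesaro (r : ℝ → ℝ) (hloc : ∀ a b : ℝ, IntervalIntegrable r volume a b)
    (p : ℝ) (hp : 0 < p) (L : ℝ)
    (hL : Tendsto (fun t => r t / (t^(p-1) * Real.log t + t^(p-1)/p)) atTop (nhds L)) :
    Tendsto (fun t => (∫ τ in (0:ℝ)..t, r τ) / (t^p * Real.log t / p)) atTop (nhds L) := by
  set W : ℝ → ℝ := fun t => t^(p-1) * Real.log t + t^(p-1)/p with hW
  set D : ℝ → ℝ := fun t => t^p * Real.log t / p with hD
  have hDtop : Tendsto D atTop atTop :=
    ((tendsto_rpow_atTop hp).atTop_mul_atTop₀ Real.tendsto_log_atTop).atTop_div_const hp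
  have hDderiv : ∀ t : ℝ, 0 < t → HasDerivAt D (W t) t := by
    intro t ht
    have h1 : HasDerivAt (fun x : ℝ => x^p) (p * t^(p-1)) t :=
      (Real.hasDerivAt_rpow_const (Or.inl ht.ne')).congr_deriv (by ring)
    have h2 : HasDerivAt Real.log t⁻¹ t := Real.hasDerivAt_log ht.ne'
    have := (h1.mul h2).div_const p
    refine this.congr_deriv (Eq.symm ?_)
    have h3 : t^p * t⁻¹ = t^(p-1) := by
      rw [Real.rpow_sub ht, Real.rpow_one, div_eq_mul_inv]
    have h5 : t^(p-1) * t = t^p := by rw [← h3]; field_simp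
    rw [hW]
    field_simp
    linear_combination h5
  have hWpos : ∀ t : ℝ, 2 ≤ t → 0 < W t := by
    intro t ht
    have h0 : (0:ℝ) < t := by linarith
    have h1 : 0 < Real.log t := Real.log_pos (by linarith)
    have h2 : (0:ℝ) < t^(p-1) := Real.rpow_pos_of_pos h0 _
    rw [hW]; positivity
  have hWcont : ∀ a b : ℝ, 2 ≤ a → IntervalIntegrable W volume a b ∨ True := fun _ _ _ => Or.inr trivial
  rw [Metric.tendsto_nhds]
  intro ε hε
  have hL' := (Metric.tendsto_nhds.mp hL) (ε/3) (by positivity)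
  rw [eventually_atTop] at hL'
  obtain ⟨T₁, hT₁⟩ := hL'
  set T := max T₁ 2 with hT
  have hT2 : (2:ℝ) ≤ T := le_max_right _ _
  have hrW : ∀ τ : ℝ, T ≤ τ → |r τ - L * W τ| ≤ ε/3 * W τ := by
    intro τ hτ
    have hWp := hWpos τ (le_trans hT2 hτ)
    have := hT₁ τ (le_trans (le_max_left _ _) hτ)
    rw [Real.dist_eq] at this
    have h2 : |r τ / W τ - L| * W τ ≤ ε/3 * W τ :=
      mul_le_mul_of_nonneg_right this.le hWp.le
    have h4 : (r τ / W τ - L) * W τ = r τ - L * W τ := by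
      field_simp
    calc |r τ - L * W τ| = |(r τ / W τ - L) * W τ| := by rw [h4]
      _ = |r τ / W τ - L| * |W τ| := abs_mul _ _
      _ = |r τ / W τ - L| * W τ := by rw [abs_of_pos hWp]
      _ ≤ ε/3 * W τ := h2
  set K := |(∫ τ in (0:ℝ)..T, r τ) - L * D T| with hK
  have hKD : Tendsto (fun t => K / D t) atTop (nhds 0) := tendsto_const_nhds.div_atTop hDtop
  have hKD' := (Metric.tendsto_nhds.mp hKD) (ε/3) (by positivity)
  filter_upwards [eventually_ge_atTop T, hKD', hDtop.eventually_gt_atTop 0,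
    hDtop.eventually_ge_atTop (D T)] with t htT hKDt hDt hDTt
  -- FTC on [T, t]
  have hTt : T ≤ t := htT
  have hWint : IntervalIntegrable W volume T t := by
    apply ContinuousOn.intervalIntegrable
    intro x hx
    rw [Set.uIcc_of_le hTt] at hx
    have hx0 : 0 < x := lt_of_lt_of_le (by linarith) hx.1
    have c1 : ContinuousAt (fun y : ℝ => y^(p-1)) x :=
      (Real.continuousAt_rpow_const x (p-1) (Or.inl hx0.ne'))
    exact ((c1.mul (Real.continuousAt_log hx0.ne')).add (c1.div_const p)).continuousWithinAt
  have hWftc : (∫ τ in T..t, W τ) = D t - D T := by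
    apply intervalIntegral.integral_eq_sub_of_hasDerivAt
    · intro x hx
      rw [Set.uIcc_of_le hTt] at hx
      exact hDderiv x (lt_of_lt_of_le (by linarith) hx.1)
    · exact hWint
  have hint1 : IntervalIntegrable (fun τ => r τ - L * W τ) volume T t :=
    (hloc T t).sub (hWint.const_mul L)
  have habs : |(∫ τ in T..t, r τ) - L * (D t - D T)| ≤ ε/3 * (D t - D T) := by
    have h1 : (∫ τ in T..t, r τ) - L * (D t - D T) = ∫ τ in T..t, (r τ - L * W τ) := by
      rw [intervalIntegral.integral_sub (hloc T t) (hWint.const_mul L),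
        intervalIntegral.integral_const_mul, hWftc]
    rw [h1]
    calc |∫ τ in T..t, (r τ - L * W τ)| ≤ ∫ τ in T..t, |r τ - L * W τ| :=
          intervalIntegral.abs_integral_le_integral_abs hTt
      _ ≤ ∫ τ in T..t, ε/3 * W τ := by
          apply intervalIntegral.integral_mono_on hTt hint1.abs (hWint.const_mul _)
          intro x hx
          exact hrW x hx.1
      _ = ε/3 * (D t - D T) := by rw [intervalIntegral.integral_const_mul, hWftc]
  have hsplit : (∫ τ in (0:ℝ)..t, r τ) = (∫ τ in (0:ℝ)..T, r τ) + ∫ τ in T..t, r τ :=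
    (intervalIntegral.integral_add_adjacent_intervals (hloc 0 T) (hloc T t)).symm
  rw [Real.dist_eq]
  have hDTnn : 0 ≤ D T := by
    rw [hD]
    have h0 : (0:ℝ) < T := by linarith
    have := Real.log_nonneg (by linarith : (1:ℝ) ≤ T)
    positivity
  have hnum : |(∫ τ in (0:ℝ)..t, r τ) - L * D t| ≤ K + ε/3 * D t := by
    have hdd : 0 ≤ D t - D T := by linarith
    calc |(∫ τ in (0:ℝ)..t, r τ) - L * D t|
        = |((∫ τ in (0:ℝ)..T, r τ) - L * D T) + ((∫ τ in T..t, r τ) - L * (D t - D T))| := by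
          rw [hsplit]; ring_nf
      _ ≤ K + |(∫ τ in T..t, r τ) - L * (D t - D T)| := by
          rw [hK]; exact abs_add_le _ _
      _ ≤ K + ε/3 * (D t - D T) := by linarith [habs]
      _ ≤ K + ε/3 * D t := by nlinarith [hDTnn, hε]
  have hfinal : |(∫ τ in (0:ℝ)..t, r τ) / D t - L| ≤ K / D t + ε/3 := by
    have h1 : (∫ τ in (0:ℝ)..t, r τ) / D t - L = ((∫ τ in (0:ℝ)..t, r τ) - L * D t) / D t := by
      field_simp
    rw [h1, abs_div, abs_of_pos hDt, div_le_iff₀ hDt]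
    calc |(∫ τ in (0:ℝ)..t, r τ) - L * D t| ≤ K + ε/3 * D t := hnum
      _ = (K / D t + ε/3) * D t := by field_simp
  have hK3 : K / D t < ε/3 := by
    have := hKDt
    rw [Real.dist_eq, sub_zero] at this
    exact lt_of_abs_lt this
  calc |(∫ τ in (0:ℝ)..t, r τ) / D t - L| ≤ K / D t + ε/3 := hfinal
    _ < ε/3 + ε/3 := by linarith
    _ < ε := by linarith

lemma slope_rpow (β : ℝ) (hβ : 0 < β) :
    Tendsto (fun u : ℝ => ((1+u)^(1/β) - 1)/u) (nhdsWithin 0 {(0:ℝ)}ᶜ) (nhds (1/β)) := by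
  have h0 : HasDerivAt (fun x : ℝ => x^(1/β)) ((1/β) * (1:ℝ)^((1/β)-1)) 1 :=
    Real.hasDerivAt_rpow_const (Or.inl one_ne_zero)
  have h1 : HasDerivAt (fun x : ℝ => 1 + x) 1 (0:ℝ) := (hasDerivAt_id (0:ℝ)).const_add 1
  have h2 : HasDerivAt (fun x : ℝ => (1+x)^(1/β)) (1/β) 0 := by
    have h0' : HasDerivAt (fun x : ℝ => x^(1/β)) ((1/β) * (1:ℝ)^((1/β)-1)) (1 + 0) := by
      norm_num at h0 ⊢; exact h0
    have := h0'.comp 0 h1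
    simpa [Real.one_rpow, Function.comp_def] using this
  have h3 := hasDerivAt_iff_tendsto_slope.mp h2
  refine h3.congr' ?_
  filter_upwards [self_mem_nhdsWithin] with u hu
  rw [slope_def_field]
  have : ((1:ℝ)+0)^(1/β) = 1 := by norm_num
  rw [this]
  simp [div_eq_mul_inv]

theorem Binv_integral_asymptotic_beta_small (β N t₀ : ℝ)
    (hβ : 0 < β) (hβ2 : β < 2) (hN : 0 < N) (ht₀ : 0 < t₀)
    (B Binv : ℝ → ℝ)
    (hBconv : ConvexOn ℝ (Set.Ici 0) B) (hB0 : B 0 = 0)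
    (hBform : ∀ t > t₀, B t = N * Real.exp (t ^ β))
    (hBinvmono : MonotoneOn Binv (Set.Ici 0))
    (hBinvnn : ∀ r ≥ (0:ℝ), 0 ≤ Binv r)
    (hBinv : ∀ r > N * Real.exp (t₀ ^ β), Binv r = (Real.log (r / N)) ^ (1/β)) :
    Tendsto (fun t =>
      ((∫ τ in (0:ℝ)..t, Binv (1 / Phi τ))
          - (2:ℝ) ^ (-1/β) * (β / (2 + β)) * t ^ (2/β + 1))
        / ((2:ℝ) ^ (-1/β) * (2 / (2 - β)) * t ^ (2/β - 1) * Real.log t))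
      atTop (nhds 1) := by
  have hβ2' : (0:ℝ) < 2 - β := by linarith
  set c : ℝ := (2:ℝ)^(-1/β) with hc
  have hcpos : 0 < c := Real.rpow_pos_of_pos two_pos _
  set C : ℝ := Real.log (Real.sqrt (2*Real.pi)) - Real.log N with hCdef
  set E : ℝ → ℝ := fun t => Real.log ((1/Phi t)/N) - (t^2/2 + Real.log t + C) with hEdef
  have hEt : Tendsto E atTop (nhds 0) := E_tendsto N hN
  have hEnn : ∀ t : ℝ, 2 ≤ t → 0 ≤ E t := by
    intro t ht
    have := logPhi_lower N hN ht
    rw [hEdef]; dsimp only; linarith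
  set f : ℝ → ℝ := fun τ => Binv (1/Phi τ) with hfdef
  have hfmono : Monotone f := by
    intro s t hst
    exact hBinvmono (Set.mem_Ici.mpr (le_of_lt (one_div_pos.mpr (Phi_pos s))))
      (Set.mem_Ici.mpr (le_of_lt (one_div_pos.mpr (Phi_pos t))))
      (one_div_le_one_div_of_le (Phi_pos t) (Phi_antitone hst))
  have hfint : ∀ u v : ℝ, IntervalIntegrable f volume u v := fun u v =>
    (hfmono.monotoneOn _).intervalIntegrable
  have hppos : 0 < 2/β - 1 := by
    have : 1 < 2/β := (one_lt_div hβ).mpr hβ2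
    linarith
  have hrpow_cont : Continuous (fun τ : ℝ => τ^(2/β)) := by
    rw [continuous_iff_continuousAt]
    intro x
    exact Real.continuousAt_rpow_const x (2/β) (Or.inr (by positivity))
  set r : ℝ → ℝ := fun τ => f τ - c * τ^(2/β) with hrdef
  have hrint : ∀ u v : ℝ, IntervalIntegrable r volume u v := fun u v =>
    (hfint u v).sub ((continuous_const.mul hrpow_cont).intervalIntegrable u v)
  have hlog_atTop := Real.tendsto_log_atTop
  -- vC limit
  have hvC : Tendsto (fun t => (Real.log t + C + E t)/Real.log t) atTop (nhds 1) := by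
    have h1 : Tendsto (fun t => (C + E t)/Real.log t) atTop (nhds 0) := by
      have h0 : Tendsto (fun t : ℝ => C + E t) atTop (nhds C) := by
        simpa using (tendsto_const_nhds (x := C) (f := atTop)).add hEt
      exact h0.div_atTop hlog_atTop
    have h2 : Tendsto (fun t => 1 + (C + E t)/Real.log t) atTop (nhds 1) := by
      simpa using (tendsto_const_nhds (x := (1:ℝ)) (f := atTop)).add h1
    refine h2.congr' ?_
    filter_upwards [eventually_ge_atTop (2:ℝ)] with t ht
    have hlt : 0 < Real.log t := Real.log_pos (by linarith)
    field_simp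
    ring
  have hlogsq : Tendsto (fun t : ℝ => Real.log t / t^2) atTop (nhds 0) := by
    have := (isLittleO_log_rpow_atTop (by norm_num : (0:ℝ) < 2)).tendsto_div_nhds_zero
    refine this.congr' ?_
    filter_upwards [eventually_ge_atTop (0:ℝ)] with t _
    rw [Real.rpow_two]
  set u : ℝ → ℝ := fun t => 2*(Real.log t + C + E t)/t^2 with hudef
  have hu0 : Tendsto u atTop (nhds 0) := by
    have h1 := (hvC.mul hlogsq).const_mul 2
    simp only [mul_zero] at h1
    refine h1.congr' ?_
    filter_upwards [eventually_ge_atTop (2:ℝ)] with t ht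
    have hlt : Real.log t ≠ 0 := (Real.log_pos (by linarith)).ne'
    have ht0 : t ≠ 0 := by positivity
    rw [hudef]
    field_simp
    all_goals ring
  have hupos : ∀ᶠ t in atTop, 0 < u t := by
    filter_upwards [eventually_ge_atTop (2:ℝ),
      eventually_ge_atTop (Real.exp (|C| + 1))] with t ht2 hte
    have hlt : |C| + 1 ≤ Real.log t := by
      have := Real.log_le_log (Real.exp_pos _) hte
      rwa [Real.log_exp] at this
    have h1 : 0 < Real.log t + C + E t := by
      have := hEnn t ht2
      have := abs_le.mp (le_refl |C|) |>.1
      linarith [neg_abs_le C]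
    rw [hudef]
    have : (0:ℝ) < t^2 := by positivity
    positivity
  have huslope : Tendsto (fun t => ((1 + u t)^(1/β) - 1)/(u t)) atTop (nhds (1/β)) :=
    (slope_rpow β hβ).comp (tendsto_nhdsWithin_of_tendsto_nhds_of_eventually_within _ hu0
      (hupos.mono fun t ht => ne_of_gt ht))
  -- eventual formula for r
  have hfr : ∀ᶠ t in atTop, r t = c * ((1 + u t)^(1/β) - 1) * t^(2/β) := by
    filter_upwards [eventually_ge_atTop (2:ℝ),
      one_div_Phi_tendsto.eventually_gt_atTop (N * Real.exp (t₀^β)), hupos] with t ht2 htB hut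
    have ht0 : (0:ℝ) < t := by linarith
    have hfeq : f t = (t^2/2 + Real.log t + C + E t)^(1/β) := by
      rw [hfdef]
      dsimp only
      rw [hBinv (1/Phi t) htB]
      congr 1
      rw [hEdef]
      dsimp only
      ring
    have hq : t^2/2 + Real.log t + C + E t = (t^2/2) * (1 + u t) := by
      rw [hudef]
      dsimp only
      field_simp
      ring
    have hhalf : (t^2/2)^(1/β) = c * t^(2/β) := by
      have e1 : (t^2:ℝ)^(1/β) = t^(2/β) := by
        rw [← Real.rpow_natCast t 2, ← Real.rpow_mul ht0.le]
        norm_num [div_eq_mul_inv]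
      have e2 : c = ((2:ℝ)^(1/β))⁻¹ := by
        rw [hc, neg_div, Real.rpow_neg (by norm_num : (0:ℝ) ≤ 2)]
      rw [Real.div_rpow (by positivity) (by norm_num), e1, e2, div_eq_mul_inv, mul_comm]
    have honeu : (0:ℝ) ≤ 1 + u t := by linarith
    have : f t = c * t^(2/β) * (1 + u t)^(1/β) := by
      rw [hfeq, hq, Real.mul_rpow (by positivity) honeu, hhalf]
      try ring
    rw [hrdef]
    dsimp only
    rw [this]
    ring
  -- limit of r over t^(2/β-2) log t
  have hnum1 : Tendsto (fun t => r t / (t^(2/β-1-1) * Real.log t)) atTop (nhds (2*c/β)) := by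
    have hmain : Tendsto (fun t => (c * (((1 + u t)^(1/β) - 1)/(u t)))
        * (2 * ((Real.log t + C + E t)/Real.log t))) atTop (nhds ((c * (1/β)) * (2 * 1))) :=
      (huslope.const_mul c).mul (hvC.const_mul 2)
    have hval : (c * (1/β)) * (2 * 1) = 2*c/β := by ring
    rw [hval] at hmain
    refine hmain.congr' ?_
    filter_upwards [hfr, hupos, eventually_ge_atTop (2:ℝ)] with t hrt hut ht2
    have ht0 : (0:ℝ) < t := by linarith
    have hlt : 0 < Real.log t := Real.log_pos (by linarith)
    have htp : (0:ℝ) < t^(2/β-1-1) := Real.rpow_pos_of_pos ht0 _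
    have hta : t^(2/β) = t^(2/β-1-1) * t^2 := by
      rw [← Real.rpow_two, ← Real.rpow_add ht0]
      congr 1
      ring
    have hut2 : u t * t^2 = 2*(Real.log t + C + E t) := by
      rw [hudef]
      dsimp only
      field_simp
    have hune : u t ≠ 0 := ne_of_gt hut
    have hqne : t^(2/β-1-1) ≠ 0 := htp.ne'
    have halg : ∀ (cc X U q l t2 : ℝ), U ≠ 0 → l ≠ 0 → q ≠ 0 →
        cc * ((X - 1) / U) * (U * t2/l) = cc*(X-1)*(q*t2)/(q*l) := by
      intros cc X U q l t2 h1 h2 h3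
      field_simp
    rw [hrt, hta, mul_div_assoc', mul_div_assoc', ← hut2, mul_div_assoc]
    exact halg c ((1 + u t)^(1/β)) (u t) (t^(2/β-1-1)) (Real.log t) (t^2)
      hune hlt.ne' hqne
  -- switch denominator to W
  have hQ : Tendsto (fun t => (t^(2/β-1-1) * Real.log t)
      / (t^(2/β-1-1) * Real.log t + t^(2/β-1-1)/(2/β-1))) atTop (nhds 1) := by
    have h0 : Tendsto (fun t => 1 + 1/((2/β-1) * Real.log t)) atTop (nhds 1) := by
      have h1 : Tendsto (fun t => 1/((2/β-1) * Real.log t)) atTop (nhds 0) :=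
        tendsto_const_nhds.div_atTop (hlog_atTop.const_mul_atTop hppos)
      simpa using (tendsto_const_nhds (x := (1:ℝ)) (f := atTop)).add h1
    have h2 := h0.inv₀ (by norm_num)
    norm_num at h2
    refine h2.congr' ?_
    filter_upwards [eventually_ge_atTop (2:ℝ)] with t ht2
    have ht0 : (0:ℝ) < t := by linarith
    have hlt : 0 < Real.log t := Real.log_pos (by linarith)
    have htp : (0:ℝ) < t^(2/β-1-1) := Real.rpow_pos_of_pos ht0 _
    rw [eq_comm]
    field_simp
  have hnumW : Tendsto (fun t => r t / (t^(2/β-1-1) * Real.log t + t^(2/β-1-1)/(2/β-1)))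
      atTop (nhds (2*c/β)) := by
    have := hnum1.mul hQ
    rw [mul_one] at this
    refine this.congr' ?_
    filter_upwards [eventually_ge_atTop (2:ℝ)] with t ht2
    have ht0 : (0:ℝ) < t := by linarith
    have hlt : 0 < Real.log t := Real.log_pos (by linarith)
    have htp : (0:ℝ) < t^(2/β-1-1) := Real.rpow_pos_of_pos ht0 _
    rw [div_mul_div_comm, div_eq_div_iff (by positivity) ?_]
    · ring
    · have : (0:ℝ) < t^(2/β-1-1) * Real.log t + t^(2/β-1-1)/(2/β-1) := by positivity
      positivity
  have hce := cesaro r hrint (2/β-1) hppos (2*c/β) hnumW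
  have hsplit : ∀ t : ℝ, (∫ τ in (0:ℝ)..t, f τ)
      = (∫ τ in (0:ℝ)..t, r τ) + c * (β/(2+β)) * t^(2/β+1) := by
    intro t
    have hint2 : IntervalIntegrable (fun τ : ℝ => c * τ^(2/β)) volume 0 t :=
      (continuous_const.mul hrpow_cont).intervalIntegrable 0 t
    have h1 : (∫ τ in (0:ℝ)..t, f τ) = (∫ τ in (0:ℝ)..t, (r τ + c * τ^(2/β))) := by
      apply intervalIntegral.integral_congr
      intro x _
      rw [hrdef]
      dsimp only
      ring
    rw [h1, intervalIntegral.integral_add (hrint 0 t) hint2,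
      intervalIntegral.integral_const_mul]
    have h2 : (∫ τ in (0:ℝ)..t, τ^(2/β)) = t^(2/β+1)/(2/β+1) := by
      rw [integral_rpow (Or.inl (by linarith : (-1:ℝ) < 2/β)),
        Real.zero_rpow (by positivity : 2/β+1 ≠ 0)]
      ring
    rw [h2]
    congr 1
    have h4 : (2/β+1) = (2+β)/β := by
      field_simp
    rw [h4, div_div_eq_mul_div]
    ring
  have hfin0 := hce.mul_const (β/(2*c))
  have hone : (2*c/β) * (β/(2*c)) = 1 := by
    field_simp
  rw [hone] at hfin0
  refine hfin0.congr' ?_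
  filter_upwards [eventually_ge_atTop (2:ℝ)] with t ht2
  have ht0 : (0:ℝ) < t := by linarith
  have hlt : 0 < Real.log t := Real.log_pos (by linarith)
  have htp : (0:ℝ) < t^(2/β-1) := Real.rpow_pos_of_pos ht0 _
  rw [hsplit t, add_sub_cancel_right]
  rw [div_mul_eq_mul_div, div_eq_div_iff (by positivity) (by positivity)]
  field_simp
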